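/- Define f : (0,∞) → ℝ by f(x) = ln x for x ∈ (0,1] and f(x) = x−1 for x > 1. Then the quasi-arithmetic mean A_f is a weak-Hardy mean but not a Hardy mean. -/

import Mathlib

/-- The quasi-arithmetic mean generated by `f`, the inverse being taken on `I`. -/
noncomputable def qam (f : ℝ → ℝ) (I : Set ℝ) (n : ℕ) (a : Fin n → ℝ) : ℝ :=
  Function.invFunOn f I ((∑ i, f (a i)) / n)

/-- The specific generator: `f x = ln x` on `(0,1]` and `f x = x - 1` on `(1,∞)`. -/
noncomputable def fExa : ℝ → ℝ := fun x => if x ≤ 1 then Real.log x else x - 1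

noncomputable def gInv : ℝ → ℝ := fun y => if y ≤ 0 then Real.exp y else y + 1

lemma gInv_pos (y : ℝ) : 0 < gInv y := by
  unfold gInv; split
  · exact Real.exp_pos y
  · push_neg at *; linarith

lemma fExa_gInv (y : ℝ) : fExa (gInv y) = y := by
  unfold fExa gInv
  rcases le_or_gt y 0 with h | h
  · rw [if_pos h, if_pos (by simpa using Real.exp_le_one_iff.mpr h), Real.log_exp]
  · rw [if_neg (not_le.mpr h), if_neg (by push_neg; linarith)]; ring

lemma fExa_strictMonoOn : StrictMonoOn fExa (Set.Ioi 0) := by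
  intro x hx y hy hxy
  simp only [Set.mem_Ioi] at hx hy
  unfold fExa
  rcases le_or_gt x 1 with h1 | h1 <;> rcases le_or_gt y 1 with h2 | h2
  · rw [if_pos h1, if_pos h2]; exact Real.log_lt_log hx hxy
  · rw [if_pos h1, if_neg (not_le.mpr h2)]
    calc Real.log x ≤ 0 := Real.log_nonpos (le_of_lt hx) h1
    _ < y - 1 := by linarith
  · linarith
  · rw [if_neg (not_le.mpr h1), if_neg (not_le.mpr h2)]; linarith

lemma qam_eq (n : ℕ) (a : Fin n → ℝ) :
    qam fExa (Set.Ioi 0) n a = gInv ((∑ i, fExa (a i)) / n) := by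
  unfold qam
  set y := (∑ i, fExa (a i)) / (n : ℝ)
  have hex : ∃ x ∈ Set.Ioi (0:ℝ), fExa x = y := ⟨gInv y, gInv_pos y, fExa_gInv y⟩
  have h1 := Function.invFunOn_eq hex
  have h2 := Function.invFunOn_mem hex
  exact fExa_strictMonoOn.injOn h2 (gInv_pos y) (by rw [h1, fExa_gInv])

lemma gInv_le_exp (y : ℝ) : gInv y ≤ Real.exp y := by
  unfold gInv; split
  · exact le_rfl
  · exact Real.add_one_le_exp y

lemma add_one_le_gInv (y : ℝ) : y + 1 ≤ gInv y := by
  unfold gInv; split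
  · exact Real.add_one_le_exp y
  · exact le_rfl

lemma fExa_le (x : ℝ) (hx : 0 < x) : fExa x ≤ Real.log x + x := by
  unfold fExa; split
  · linarith
  · push_neg at *
    have : Real.log x ≥ 0 := Real.log_nonneg (by linarith)
    linarith

lemma fExa_of_le_one {x : ℝ} (h : x ≤ 1) : fExa x = Real.log x := if_pos h

lemma fExa_of_one_lt {x : ℝ} (h : 1 < x) : fExa x = x - 1 := if_neg (not_le.mpr h)

open Finset Real

-- (m/e)^m ≤ m!
lemma factorial_lower (m : ℕ) : ((m : ℝ) / Real.exp 1) ^ m ≤ (m.factorial : ℝ) := by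
  have hm : (0:ℝ) ≤ m := Nat.cast_nonneg m
  have h1 : (m:ℝ) ^ m / (m.factorial : ℝ) ≤ Real.exp m := by
    calc (m:ℝ) ^ m / (m.factorial : ℝ)
        ≤ ∑ i ∈ Finset.range (m+1), (m:ℝ) ^ i / (i.factorial : ℝ) := by
          refine Finset.single_le_sum (f := fun i => (m:ℝ)^i / (i.factorial:ℝ)) ?_ (Finset.self_mem_range_succ m)
          intro i _
          positivity
      _ ≤ Real.exp m := Real.sum_le_exp_of_nonneg hm (m+1)
  have hexp : Real.exp (m:ℝ) = (Real.exp 1) ^ m := by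
    rw [← Real.exp_nat_mul]; ring_nf
  have hfac : (0:ℝ) < (m.factorial : ℝ) := by positivity
  have hep : (0:ℝ) < Real.exp 1 ^ m := by positivity
  rw [div_pow]
  rw [div_le_iff₀ hep]
  rw [div_le_iff₀ hfac] at h1
  rw [hexp] at h1
  linarith [h1]

-- geometric mean bound: for positive a, with m = n+1,
-- exp((∑_{k<m} log a k)/m) ≤ e^2 * (∑_{k<m} (k+1)(k+2) a k) / m^3
lemma geom_bound (a : ℕ → ℝ) (ha : ∀ k, 0 < a k) (n : ℕ) :
    Real.exp ((∑ k ∈ Finset.range (n+1), Real.log (a k)) / (n+1)) ≤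
      Real.exp 1 ^ 2 * (∑ k ∈ Finset.range (n+1), ((k:ℝ)+1) * ((k:ℝ)+2) * a k) / ((n:ℝ)+1) ^ 3 := by
  set m := n + 1 with hm
  have hmpos : (0:ℝ) < m := by positivity
  have hmR : ((m:ℕ):ℝ) = (n:ℝ) + 1 := by push_cast [hm]; ring
  set w : ℕ → ℝ := fun _ => 1 / (m : ℝ) with hw
  set z : ℕ → ℝ := fun k => ((k:ℝ)+1) * ((k:ℝ)+2) * a k with hz
  have hzn : ∀ k ∈ Finset.range m, 0 ≤ z k := by
    intro k _; have := (ha k).le; positivity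
  have amgm : ∏ k ∈ Finset.range m, z k ^ (1/(m:ℝ)) ≤ ∑ k ∈ Finset.range m, (1/(m:ℝ)) * z k := by
    refine Real.geom_mean_le_arith_mean_weighted _ w z ?_ ?_ hzn
    · intro i _; rw [hw]; positivity
    · rw [hw]; simp [Finset.sum_const, Finset.card_range]
  -- split product
  have hsplit : ∏ k ∈ Finset.range m, z k ^ (1/(m:ℝ)) =
      (∏ k ∈ Finset.range m, (((k:ℝ)+1) * ((k:ℝ)+2)) ^ (1/(m:ℝ))) *
      (∏ k ∈ Finset.range m, (a k) ^ (1/(m:ℝ))) := by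
    rw [← Finset.prod_mul_distrib]
    refine Finset.prod_congr rfl ?_
    intro k _
    rw [hz]
    rw [Real.mul_rpow (by positivity) (ha k).le]
  -- product of a's is the exp of average log
  have hG : (∏ k ∈ Finset.range m, (a k) ^ (1/(m:ℝ))) =
      Real.exp ((∑ k ∈ Finset.range m, Real.log (a k)) / (m:ℝ)) := by
    rw [Finset.sum_div, Real.exp_sum]
    refine Finset.prod_congr rfl ?_
    intro k _
    rw [Real.rpow_def_of_pos (ha k)]
    rw [mul_one_div, div_eq_mul_one_div]
  -- lower bound for D
  have hD : ((m:ℝ)/Real.exp 1) ^ 2 ≤ ∏ k ∈ Finset.range m, (((k:ℝ)+1) * ((k:ℝ)+2)) ^ (1/(m:ℝ)) := by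
    have hprod : (∏ k ∈ Finset.range m, (((k:ℝ)+1) * ((k:ℝ)+2))) =
        (m.factorial : ℝ) * ((m+1).factorial : ℝ) := by
      rw [Finset.prod_mul_distrib]
      congr 1
      · have := Finset.prod_range_add_one_eq_factorial m
        calc (∏ k ∈ Finset.range m, ((k:ℝ)+1)) = ((∏ k ∈ Finset.range m, (k+1) : ℕ) : ℝ) := by
              push_cast; rfl
          _ = (m.factorial : ℝ) := by rw [this]
      · have : ∀ M : ℕ, (∏ k ∈ Finset.range M, ((k:ℝ)+2)) = ((M+1).factorial : ℝ) := by
          intro M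
          induction M with
          | zero => simp [Nat.factorial]
          | succ M ih =>
              rw [Finset.prod_range_succ, ih]
              rw [show M + 1 + 1 = (M+1)+1 from rfl, Nat.factorial_succ (M+1)]
              push_cast; ring
        exact this m
    rw [Real.finset_prod_rpow _ _ (fun i _ => by positivity), hprod]
    have hfac2 : (((m:ℝ)/Real.exp 1) ^ 2) ^ (m:ℕ) ≤ (m.factorial : ℝ) * ((m+1).factorial : ℝ) := by
      have h1 := factorial_lower m
      have h2 : ((m:ℝ)/Real.exp 1) ^ m ≤ ((m+1).factorial : ℝ) := by
        refine h1.trans ?_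
        exact_mod_cast Nat.cast_le.mpr (Nat.factorial_le (Nat.le_succ m))
      calc (((m:ℝ)/Real.exp 1) ^ 2) ^ (m:ℕ) = ((m:ℝ)/Real.exp 1) ^ m * ((m:ℝ)/Real.exp 1) ^ m := by ring
        _ ≤ (m.factorial : ℝ) * ((m+1).factorial : ℝ) := by
            refine mul_le_mul h1 h2 (by positivity) (by positivity)
    have hq : (0:ℝ) ≤ ((m:ℝ)/Real.exp 1) ^ 2 := by positivity
    calc ((m:ℝ)/Real.exp 1) ^ 2
        = ((((m:ℝ)/Real.exp 1) ^ 2) ^ (m:ℕ)) ^ (1/(m:ℝ)) := by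
          rw [← Real.rpow_natCast (((m:ℝ)/Real.exp 1) ^ 2) m, ← Real.rpow_mul hq]
          rw [mul_one_div, div_self (ne_of_gt hmpos), Real.rpow_one]
      _ ≤ ((m.factorial : ℝ) * ((m+1).factorial : ℝ)) ^ (1/(m:ℝ)) := by
          refine Real.rpow_le_rpow (by positivity) hfac2 (by positivity)
  have hB : ∑ k ∈ Finset.range m, (1/(m:ℝ)) * z k = (∑ k ∈ Finset.range m, z k) / (m:ℝ) := by
    rw [Finset.sum_div]; exact Finset.sum_congr rfl fun k _ => by ring
  set G := Real.exp ((∑ k ∈ Finset.range m, Real.log (a k)) / (m:ℝ)) with hGdef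
  have hGpos : 0 < G := Real.exp_pos _
  have key : ((m:ℝ)/Real.exp 1)^2 * G ≤ (∑ k ∈ Finset.range m, z k) / (m:ℝ) := by
    calc ((m:ℝ)/Real.exp 1)^2 * G
        ≤ (∏ k ∈ Finset.range m, (((k:ℝ)+1) * ((k:ℝ)+2)) ^ (1/(m:ℝ))) * G :=
          mul_le_mul_of_nonneg_right hD hGpos.le
      _ = ∏ k ∈ Finset.range m, z k ^ (1/(m:ℝ)) := by rw [hsplit, hG]
      _ ≤ ∑ k ∈ Finset.range m, (1/(m:ℝ)) * z k := amgm
      _ = (∑ k ∈ Finset.range m, z k) / (m:ℝ) := hB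
  have hfin : G ≤ Real.exp 1 ^ 2 * ((∑ k ∈ Finset.range m, z k) / ((m:ℕ):ℝ) ^ 3) := by
    have h2 := mul_le_mul_of_nonneg_left key
      (le_of_lt (by positivity : (0:ℝ) < Real.exp 1^2/((m:ℕ):ℝ)^2))
    calc G = (Real.exp 1^2/((m:ℕ):ℝ)^2) * (((m:ℝ)/Real.exp 1)^2 * G) := by
          rw [div_pow]
          field_simp
      _ ≤ (Real.exp 1^2/((m:ℕ):ℝ)^2) * ((∑ k ∈ Finset.range m, z k) / (m:ℝ)) := h2
      _ = Real.exp 1 ^ 2 * ((∑ k ∈ Finset.range m, z k) / ((m:ℕ):ℝ) ^ 3) := by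
          field_simp
  have hfin2 : Real.exp ((∑ k ∈ Finset.range m, Real.log (a k)) / ((m:ℕ):ℝ)) ≤
      Real.exp 1 ^ 2 * (∑ k ∈ Finset.range m, ((k:ℝ)+1)*((k:ℝ)+2)*(a k)) / ((m:ℕ):ℝ)^3 := by
    rw [mul_div_assoc]
    simp only [hz] at hfin
    exact hfin
  rwa [hmR] at hfin2
open Finset Real

lemma tele_eq (t : ℕ → ℝ) (k : ℕ) :
    ∀ N, ∑ n ∈ Finset.range N, (if k ≤ n then t n - t (n+1) else 0) =
      if k < N then t k - t N else 0 := by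
  intro N
  induction N with
  | zero => simp
  | succ N ih =>
      rw [Finset.sum_range_succ, ih]
      rcases lt_trichotomy k N with h | h | h
      · rw [if_pos h, if_pos (Nat.le_of_lt h), if_pos (Nat.lt_succ_of_lt h)]; ring
      · subst h
        rw [if_neg (lt_irrefl k), if_pos (le_refl k), if_pos (Nat.lt_succ_self k)]; ring
      · rw [if_neg (not_lt.mpr (Nat.le_of_lt h)), if_neg (not_le.mpr h),
          if_neg (not_lt.mpr (Nat.succ_le_of_lt h))]; ring

lemma tail_cube_bound (k N : ℕ) :
    ∑ n ∈ Finset.range N, (if k ≤ n then (((n:ℝ)+1)^3)⁻¹ else 0) ≤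
      3 * ((((k:ℝ)+1) * ((k:ℝ)+2)))⁻¹ := by
  set t : ℕ → ℝ := fun n => (((n:ℝ)+1) * ((n:ℝ)+2))⁻¹ with ht
  have hstep : ∀ n : ℕ, (((n:ℝ)+1)^3)⁻¹ ≤ 3 * (t n - t (n+1)) := by
    intro n
    have h1 : (0:ℝ) < (n:ℝ)+1 := by positivity
    have h2 : (0:ℝ) < (n:ℝ)+2 := by positivity
    have h3 : (0:ℝ) < (n:ℝ)+3 := by positivity
    have htn : t n - t (n+1) = 2 * (((n:ℝ)+1) * (((n:ℝ)+2) * ((n:ℝ)+3)))⁻¹ := by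
      rw [ht]; push_cast; field_simp; ring
    rw [htn]
    rw [inv_le_iff_one_le_mul₀ (by positivity)] at *
    · have key : ((n:ℝ)+1)^3 * 6 ≥ ((n:ℝ)+1) * (((n:ℝ)+2) * ((n:ℝ)+3)) := by nlinarith [(by positivity : (0:ℝ) ≤ (n:ℝ)), sq_nonneg ((n:ℝ))]
      calc (1:ℝ) = (((n:ℝ)+1) * (((n:ℝ)+2) * ((n:ℝ)+3))) * (((n:ℝ)+1) * (((n:ℝ)+2) * ((n:ℝ)+3)))⁻¹ := by
            field_simp
        _ ≤ (((n:ℝ)+1)^3 * 6) * (((n:ℝ)+1) * (((n:ℝ)+2) * ((n:ℝ)+3)))⁻¹ := by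
            apply mul_le_mul_of_nonneg_right key (by positivity)
        _ = 3 * (2 * (((n:ℝ)+1) * (((n:ℝ)+2) * ((n:ℝ)+3)))⁻¹) * ((n:ℝ)+1)^3 := by ring
  calc ∑ n ∈ Finset.range N, (if k ≤ n then (((n:ℝ)+1)^3)⁻¹ else 0)
      ≤ ∑ n ∈ Finset.range N, (3 * (if k ≤ n then t n - t (n+1) else 0)) := by
        apply Finset.sum_le_sum
        intro n _
        split
        · exact hstep n
        · simp
    _ = 3 * (if k < N then t k - t N else 0) := by
        rw [← Finset.mul_sum, tele_eq]
    _ ≤ 3 * t k := by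
        have htnn : ∀ j : ℕ, 0 ≤ t j := fun j => by rw [ht]; positivity
        have htk := htnn k
        have htN := htnn N
        split <;> nlinarith

lemma summable_cube_aux : Summable (fun n : ℕ => (((n:ℝ)+1)^3)⁻¹) := by
  have h := (Real.summable_one_div_nat_pow (p := 3)).mpr (by norm_num)
  have h2 := (summable_nat_add_iff 1).mpr h
  apply h2.congr
  intro n
  push_cast
  rw [one_div]

lemma interchange (c : ℕ → ℝ) (hc : ∀ k, 0 ≤ c k)
    (hsum : Summable (fun k => c k / (((k:ℝ)+1) * ((k:ℝ)+2)))) :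
    Summable (fun n => (∑ k ∈ Finset.range (n+1), c k) / ((n:ℝ)+1)^3) := by
  set F : ℕ × ℕ → ℝ := fun p => if p.1 ≤ p.2 then c p.1 * (((p.2:ℝ)+1)^3)⁻¹ else 0 with hF
  have hFnn : 0 ≤ F := by
    intro p; dsimp [F]; split
    · have := hc p.1; positivity
    · exact le_rfl
  have hslice : ∀ k, Summable fun n => F (k, n) := by
    intro k
    apply Summable.of_nonneg_of_le (fun n => hFnn (k, n)) (fun n => ?_)
      (summable_cube_aux.mul_left (c k))
    dsimp [F]; split
    · exact le_rfl
    · have := hc k; positivity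
  have htsum_le : ∀ k, ∑' n, F (k, n) ≤ 3 * (c k / (((k:ℝ)+1) * ((k:ℝ)+2))) := by
    intro k
    apply Summable.tsum_le_of_sum_le (hslice k)
    intro s
    obtain ⟨N, hN⟩ := s.exists_nat_subset_range
    calc ∑ n ∈ s, F (k, n) ≤ ∑ n ∈ Finset.range N, F (k, n) :=
          Finset.sum_le_sum_of_subset_of_nonneg hN (fun n _ _ => hFnn (k, n))
      _ = c k * ∑ n ∈ Finset.range N, (if k ≤ n then (((n:ℝ)+1)^3)⁻¹ else 0) := by
          rw [Finset.mul_sum]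
          refine Finset.sum_congr rfl fun n _ => ?_
          dsimp [F]; split <;> simp
      _ ≤ c k * (3 * ((((k:ℝ)+1) * ((k:ℝ)+2)))⁻¹) :=
          mul_le_mul_of_nonneg_left (tail_cube_bound k N) (hc k)
      _ = 3 * (c k / (((k:ℝ)+1) * ((k:ℝ)+2))) := by rw [div_eq_mul_inv]; ring
  have hF_sum : Summable F := by
    rw [summable_prod_of_nonneg hFnn]
    constructor
    · exact hslice
    · apply Summable.of_nonneg_of_le (fun k => tsum_nonneg (fun n => hFnn (k, n))) htsum_le
        (hsum.mul_left 3)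
  have hswap : Summable fun p : ℕ × ℕ => F p.swap := hF_sum.prod_symm
  have h2 := ((summable_prod_of_nonneg (f := fun p : ℕ × ℕ => F p.swap)
      (fun p => hFnn p.swap)).mp hswap).2
  apply h2.congr
  intro n
  have : ∑' k, F (k, n) = ∑ k ∈ Finset.range (n+1), c k * (((n:ℝ)+1)^3)⁻¹ := by
    rw [tsum_eq_sum (s := Finset.range (n+1))]
    · exact Finset.sum_congr rfl fun k hk => by
        dsimp [F]; rw [if_pos (Nat.lt_succ_iff.mp (Finset.mem_range.mp hk))]
    · intro k hk
      dsimp [F]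
      rw [if_neg]
      exact fun h => hk (Finset.mem_range.mpr (Nat.lt_succ_of_le h))
  dsimp only [Prod.swap]
  rw [this, ← Finset.sum_mul, div_eq_mul_inv]

lemma part1 (a : ℕ → ℝ) (ha : ∀ n, 0 < a n) (hs : Summable a) :
    Summable (fun n => qam fExa (Set.Ioi 0) (n + 1) (fun k : Fin (n + 1) => a (k : ℕ))) := by
  set T := ∑' k, a k with hTdef
  have hT0 : 0 ≤ T := tsum_nonneg (fun i => (ha i).le)
  have hpart : ∀ n, ∑ k ∈ Finset.range (n+1), a k ≤ T :=
    fun n => Summable.sum_le_tsum _ (fun i _ => (ha i).le) hs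
  have hq : ∀ n : ℕ, qam fExa (Set.Ioi 0) (n+1) (fun k : Fin (n+1) => a (k:ℕ)) =
      gInv ((∑ k ∈ Finset.range (n+1), fExa (a k)) / ((n:ℝ)+1)) := by
    intro n
    rw [qam_eq]
    congr 1
    rw [Fin.sum_univ_eq_sum_range (fun k => fExa (a k)) (n+1)]
    push_cast
    rfl
  have hC := interchange (fun k => ((k:ℝ)+1)*((k:ℝ)+2)*a k)
    (fun k => by have := (ha k).le; positivity)
    (hs.congr (fun k => by
      have h1 : ((k:ℝ)+1) ≠ 0 := by positivity
      have h2 : ((k:ℝ)+2) ≠ 0 := by positivity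
      field_simp))
  have hbound : ∀ n : ℕ, gInv ((∑ k ∈ Finset.range (n+1), fExa (a k)) / ((n:ℝ)+1)) ≤
      (Real.exp T * Real.exp 1 ^ 2) *
        ((∑ k ∈ Finset.range (n+1), ((k:ℝ)+1)*((k:ℝ)+2)*(a k)) / ((n:ℝ)+1)^3) := by
    intro n
    have hn1 : (0:ℝ) < (n:ℝ)+1 := by positivity
    have hS : (∑ k ∈ Finset.range (n+1), fExa (a k)) ≤
        (∑ k ∈ Finset.range (n+1), Real.log (a k)) + T := by
      calc ∑ k ∈ Finset.range (n+1), fExa (a k)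
          ≤ ∑ k ∈ Finset.range (n+1), (Real.log (a k) + a k) :=
            Finset.sum_le_sum (fun k _ => fExa_le _ (ha k))
        _ = (∑ k ∈ Finset.range (n+1), Real.log (a k)) + ∑ k ∈ Finset.range (n+1), a k :=
            Finset.sum_add_distrib
        _ ≤ _ := by linarith [hpart n]
    have hTn : T / ((n:ℝ)+1) ≤ T := by
      apply div_le_self hT0
      simp
    calc gInv ((∑ k ∈ Finset.range (n+1), fExa (a k)) / ((n:ℝ)+1))
        ≤ Real.exp ((∑ k ∈ Finset.range (n+1), fExa (a k)) / ((n:ℝ)+1)) := gInv_le_exp _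
      _ ≤ Real.exp (((∑ k ∈ Finset.range (n+1), Real.log (a k)) + T) / ((n:ℝ)+1)) := by
          apply Real.exp_le_exp.mpr
          gcongr
      _ = Real.exp ((∑ k ∈ Finset.range (n+1), Real.log (a k)) / ((n:ℝ)+1)) *
            Real.exp (T / ((n:ℝ)+1)) := by
          rw [← Real.exp_add, add_div]
      _ ≤ (Real.exp 1 ^ 2 * (∑ k ∈ Finset.range (n+1), ((k:ℝ)+1)*((k:ℝ)+2)*(a k)) / ((n:ℝ)+1)^3) *
            Real.exp T := by
          apply mul_le_mul (geom_bound a ha n) (Real.exp_le_exp.mpr hTn) (Real.exp_pos _).le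
          have hB : 0 ≤ ∑ k ∈ Finset.range (n+1), ((k:ℝ)+1)*((k:ℝ)+2)*(a k) :=
            Finset.sum_nonneg fun k _ => by have := (ha k).le; positivity
          positivity
      _ = (Real.exp T * Real.exp 1 ^ 2) *
            ((∑ k ∈ Finset.range (n+1), ((k:ℝ)+1)*((k:ℝ)+2)*(a k)) / ((n:ℝ)+1)^3) := by
          ring
  apply Summable.of_nonneg_of_le
    (fun n => by rw [hq n]; exact (gInv_pos _).le)
    (fun n => by rw [hq n]; exact hbound n)
    (hC.mul_left (Real.exp T * Real.exp 1 ^ 2))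
open Finset Real

lemma harmonic_lower (N : ℕ) :
    Real.log ((N:ℝ)+1) ≤ ∑ j ∈ Finset.range N, 1/((j:ℝ)+1) := by
  have htele : ∑ j ∈ Finset.range N, (Real.log (((j:ℝ)+1)+1) - Real.log ((j:ℝ)+1)) =
      Real.log ((N:ℝ)+1) := by
    have := Finset.sum_range_sub (fun j => Real.log ((j:ℝ)+1)) N
    push_cast at this
    simpa using this
  rw [← htele]
  apply Finset.sum_le_sum
  intro j _
  set b : ℝ := (j:ℝ)+1 with hb
  have hb0 : (0:ℝ) < b := by positivity
  have h := Real.log_le_sub_one_of_pos (x := (b+1)/b) (by positivity)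
  rw [Real.log_div (by positivity) (by positivity)] at h
  have heq : (b+1)/b - 1 = 1/b := by field_simp; ring
  linarith

lemma harmonic_upper (K : ℕ) (hK : 1 ≤ K) :
    ∑ k ∈ Finset.range K, 1/((k:ℝ)+1) ≤ 1 + Real.log (K:ℝ) := by
  obtain ⟨K', rfl⟩ : ∃ K', K = K' + 1 := ⟨K - 1, by omega⟩
  rw [Finset.sum_range_succ' (fun k => 1/((k:ℝ)+1)) K']
  have hsum : ∑ j ∈ Finset.range K', 1/(((j+1:ℕ):ℝ)+1) ≤ Real.log ((K':ℝ)+1) := by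
    have htele : ∑ j ∈ Finset.range K', (Real.log (((j:ℝ)+1)+1) - Real.log ((j:ℝ)+1)) =
        Real.log ((K':ℝ)+1) := by
      have := Finset.sum_range_sub (fun j => Real.log ((j:ℝ)+1)) K'
      push_cast at this
      simpa using this
    rw [← htele]
    apply Finset.sum_le_sum
    intro j _
    push_cast
    set b : ℝ := (j:ℝ)+1 with hb
    have hb0 : (0:ℝ) < b := by positivity
    have h := Real.log_le_sub_one_of_pos (x := b/(b+1)) (by positivity)
    rw [Real.log_div (by positivity) (by positivity)] at h
    have heq : b/(b+1) - 1 = -(1/(b+1)) := by field_simp; ring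
    linarith
  push_cast
  push_cast at hsum
  norm_num
  norm_num at hsum
  linarith

lemma qam_eq_range (a : ℕ → ℝ) (n : ℕ) :
    qam fExa (Set.Ioi 0) (n+1) (fun k : Fin (n+1) => a (k:ℕ)) =
      gInv ((∑ k ∈ Finset.range (n+1), fExa (a k)) / ((n:ℝ)+1)) := by
  rw [qam_eq]
  congr 1
  rw [Fin.sum_univ_eq_sum_range (fun k => fExa (a k)) (n+1)]
  push_cast
  rfl

lemma part2 : ¬ (∃ C : ℝ, ∀ a : ℕ → ℝ, (∀ n, 0 < a n) → Summable a →
    Summable (fun n => qam fExa (Set.Ioi 0) (n + 1) (fun k : Fin (n + 1) => a (k : ℕ))) ∧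
    ∑' n, qam fExa (Set.Ioi 0) (n + 1) (fun k : Fin (n + 1) => a (k : ℕ)) ≤
      C * ∑' n, a n) := by
  rintro ⟨C, hC⟩
  set C' : ℝ := max C 0 with hC'def
  have hC'0 : 0 ≤ C' := le_max_right _ _
  set K : ℕ := max 3 ⌈Real.exp (3*C' + 1)⌉₊ with hKdef
  have hK3 : (3:ℕ) ≤ K := le_max_left _ _
  have hKR : (3:ℝ) ≤ (K:ℝ) := by exact_mod_cast hK3
  have hKexp : Real.exp (3*C' + 1) ≤ (K:ℝ) := by
    calc Real.exp (3*C'+1) ≤ (⌈Real.exp (3*C'+1)⌉₊ : ℝ) := Nat.le_ceil _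
      _ ≤ (K:ℝ) := by exact_mod_cast le_max_right 3 ⌈Real.exp (3*C' + 1)⌉₊
  set L := Real.log (K:ℝ) with hLdef
  have hL1 : 3*C' + 1 ≤ L := by
    rw [hLdef]
    calc 3*C'+1 = Real.log (Real.exp (3*C'+1)) := (Real.log_exp _).symm
      _ ≤ Real.log (K:ℝ) := Real.log_le_log (Real.exp_pos _) hKexp
  have hLge1 : 1 ≤ L := by nlinarith
  set M : ℝ := 2*((K:ℝ)+1)*L + 1 with hMdef
  have hM1 : 1 < M := by nlinarith
  set a : ℕ → ℝ := fun k => if k = 0 then M else if k ≤ K then 1/(k:ℝ) else (1/2:ℝ)^k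
    with hadef
  have ha0 : a 0 = M := by rw [hadef]; simp
  have hamid : ∀ i : ℕ, i + 1 ≤ K → a (i+1) = 1/((i:ℝ)+1) := by
    intro i hi
    rw [hadef]
    simp only [Nat.succ_ne_zero, if_false, if_pos hi]
    push_cast
    norm_num
  have hatail : ∀ i : ℕ, a (i + (K+1)) = (1/2:ℝ)^(K+1) * (1/2:ℝ)^i := by
    intro i
    rw [hadef]
    simp only
    rw [if_neg (by omega), if_neg (by omega), ← pow_add]
    ring_nf
  have hpos : ∀ k, 0 < a k := by
    intro k
    rw [hadef]
    simp only
    split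
    · linarith
    · split
      · rename_i h1 h2
        have : 1 ≤ k := Nat.one_le_iff_ne_zero.mpr h1
        positivity
      · positivity
  have hsum : Summable a := by
    rw [← summable_nat_add_iff (K+1)]
    apply Summable.congr ((summable_geometric_of_lt_one (by norm_num) (by norm_num :
      (1/2:ℝ) < 1)).mul_left ((1/2:ℝ)^(K+1)))
    intro i
    exact (hatail i).symm
  obtain ⟨hQsum, hQle⟩ := hC a hpos hsum
  have hq : ∀ n : ℕ, qam fExa (Set.Ioi 0) (n+1) (fun k : Fin (n+1) => a (k:ℕ)) =
      gInv ((∑ k ∈ Finset.range (n+1), fExa (a k)) / ((n:ℝ)+1)) := fun n => qam_eq_range a n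
  have hS : ∀ n : ℕ, n ≤ K → ∑ k ∈ Finset.range (n+1), fExa (a k) =
      (M - 1) - ∑ i ∈ Finset.range n, Real.log ((i:ℝ)+1) := by
    intro n hn
    rw [Finset.sum_range_succ' (fun k => fExa (a k)) n, ha0, fExa_of_one_lt hM1]
    have hterm : ∀ i ∈ Finset.range n, fExa (a (i+1)) = -Real.log ((i:ℝ)+1) := by
      intro i hi
      have hiK : i + 1 ≤ K := by
        have := Finset.mem_range.mp hi; omega
      have h1 : a (i+1) = 1/((i:ℝ)+1) := hamid i hiK
      have h2 : (1:ℝ)/((i:ℝ)+1) ≤ 1 := by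
        rw [div_le_one (by positivity)]
        have : (0:ℝ) ≤ (i:ℝ) := Nat.cast_nonneg i
        linarith
      rw [h1, fExa_of_le_one h2, one_div, Real.log_inv]
    rw [Finset.sum_congr rfl hterm, Finset.sum_neg_distrib]
    ring
  have hQlow : ∀ n : ℕ, n ≤ K → (M-1)/((n:ℝ)+1) - L + 1 ≤
      gInv ((∑ k ∈ Finset.range (n+1), fExa (a k)) / ((n:ℝ)+1)) := by
    intro n hn
    have hn1 : (0:ℝ) < (n:ℝ)+1 := by positivity
    have hlog : ∑ i ∈ Finset.range n, Real.log ((i:ℝ)+1) ≤ ((n:ℝ)+1)*L := by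
      have hL0 : 0 ≤ L := by linarith
      calc ∑ i ∈ Finset.range n, Real.log ((i:ℝ)+1)
          ≤ ∑ i ∈ Finset.range n, L := by
            apply Finset.sum_le_sum
            intro i hi
            rw [hLdef]
            apply Real.log_le_log (by positivity)
            have h3 : i + 1 ≤ K := by have := Finset.mem_range.mp hi; omega
            have : ((i:ℝ))+1 ≤ (K:ℝ) := by exact_mod_cast h3
            linarith
        _ = (n:ℝ) * L := by rw [Finset.sum_const, Finset.card_range, nsmul_eq_mul]
        _ ≤ ((n:ℝ)+1)*L := by nlinarith
    set S := ∑ k ∈ Finset.range (n+1), fExa (a k) with hSdef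
    have hgi := add_one_le_gInv (S / ((n:ℝ)+1))
    have hSn := hS n hn
    have hkey : (M-1)/((n:ℝ)+1) - L + 1 ≤ S/((n:ℝ)+1) + 1 := by
      have e1 : (M - 1 - ∑ i ∈ Finset.range n, Real.log ((i:ℝ)+1)) / ((n:ℝ)+1)
          = (M-1)/((n:ℝ)+1) - (∑ i ∈ Finset.range n, Real.log ((i:ℝ)+1))/((n:ℝ)+1) := by
        ring
      rw [hSdef, hSn, e1]
      have hdle : (∑ i ∈ Finset.range n, Real.log ((i:ℝ)+1))/((n:ℝ)+1) ≤ L :=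
        (div_le_iff₀ hn1).mpr (by linarith)
      linarith
    linarith
  have hQpos : ∀ n : ℕ, 0 ≤ qam fExa (Set.Ioi 0) (n+1) (fun k : Fin (n+1) => a (k:ℕ)) := by
    intro n; rw [hq n]; exact (gInv_pos _).le
  have htsum_lower : (M-1)*L + ((K:ℝ)+1)*(1-L) ≤
      ∑' n, qam fExa (Set.Ioi 0) (n+1) (fun k : Fin (n+1) => a (k:ℕ)) := by
    have hfin : ∑ n ∈ Finset.range (K+1), ((M-1)/((n:ℝ)+1) - L + 1) ≤
        ∑ n ∈ Finset.range (K+1), qam fExa (Set.Ioi 0) (n+1) (fun k : Fin (n+1) => a (k:ℕ)) := by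
      apply Finset.sum_le_sum
      intro n hn
      rw [hq n]
      exact hQlow n (Nat.lt_succ_iff.mp (Finset.mem_range.mp hn))
    have hsplit : ∑ n ∈ Finset.range (K+1), ((M-1)/((n:ℝ)+1) - L + 1) =
        (M-1) * (∑ n ∈ Finset.range (K+1), 1/((n:ℝ)+1)) + ((K:ℝ)+1)*(1-L) := by
      have hterm : ∀ n:ℕ, (M-1)/((n:ℝ)+1) - L + 1 = (M-1)*(1/((n:ℝ)+1)) + (1-L) := fun n => by
        ring
      rw [Finset.sum_congr rfl (fun n _ => hterm n), Finset.sum_add_distrib, ← Finset.mul_sum,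
        Finset.sum_const, Finset.card_range, nsmul_eq_mul]
      push_cast
      ring
    have hharm : L ≤ ∑ n ∈ Finset.range (K+1), 1/((n:ℝ)+1) := by
      have h1 := harmonic_lower (K+1)
      have h2 : L ≤ Real.log (((K+1:ℕ):ℝ)+1) := by
        rw [hLdef]
        apply Real.log_le_log (by positivity)
        push_cast
        linarith
      linarith
    have hM0 : 0 ≤ M - 1 := by linarith
    have hstep : (M-1)*L + ((K:ℝ)+1)*(1-L) ≤
        ∑ n ∈ Finset.range (K+1), ((M-1)/((n:ℝ)+1) - L + 1) := by
      rw [hsplit]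
      have := mul_le_mul_of_nonneg_left hharm hM0
      linarith
    have htail := Summable.sum_le_tsum (Finset.range (K+1)) (fun i _ => hQpos i) hQsum
    exact le_trans (le_trans hstep hfin) htail
  have htsum_a : ∑' n, a n ≤ 3*((K:ℝ)+1)*L := by
    rw [← Summable.sum_add_tsum_nat_add (K+1) hsum]
    have h1 : ∑ k ∈ Finset.range (K+1), a k ≤ M + (1 + L) := by
      rw [Finset.sum_range_succ' a K, ha0]
      have hmid : ∀ i ∈ Finset.range K, a (i+1) = 1/((i:ℝ)+1) := fun i hi =>
        hamid i (by have := Finset.mem_range.mp hi; omega)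
      rw [Finset.sum_congr rfl hmid]
      have hhu := harmonic_upper K (by omega)
      rw [← hLdef] at hhu
      linarith
    have h2 : ∑' i:ℕ, a (i+(K+1)) ≤ 1 := by
      rw [tsum_congr hatail, tsum_mul_left, tsum_geometric_of_lt_one (by norm_num)
        (by norm_num : (1/2:ℝ) < 1)]
      have hp : ((1:ℝ)/2)^(K+1) ≤ 1/2 := by
        calc ((1:ℝ)/2)^(K+1) ≤ ((1:ℝ)/2)^1 :=
              pow_le_pow_of_le_one (by norm_num) (by norm_num) (by omega)
          _ = 1/2 := pow_one _
      have : (1 - (1/2:ℝ))⁻¹ = 2 := by norm_num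
      rw [this]
      linarith
    have h3 : M + (1+L) + 1 ≤ 3*((K:ℝ)+1)*L := by
      rw [hMdef]
      nlinarith [mul_le_mul_of_nonneg_left hLge1 (by linarith : (0:ℝ) ≤ (K:ℝ))]
    linarith
  have hfin1 : ((K:ℝ)+1)*L^2 ≤ (M-1)*L + ((K:ℝ)+1)*(1-L) := by
    rw [hMdef]
    nlinarith [mul_nonneg (by linarith : (0:ℝ) ≤ (K:ℝ)+1) (sq_nonneg (L-1)),
      mul_nonneg (by linarith : (0:ℝ) ≤ (K:ℝ)+1) (by linarith : (0:ℝ) ≤ L)]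
  have htsa0 : 0 ≤ ∑' n, a n := tsum_nonneg fun n => (hpos n).le
  have hCle : C ≤ C' := le_max_left C 0
  have h1 : C * (∑' n, a n) ≤ C' * (∑' n, a n) := mul_le_mul_of_nonneg_right hCle htsa0
  have h2 : C' * (∑' n, a n) ≤ C' * (3*((K:ℝ)+1)*L) := mul_le_mul_of_nonneg_left htsum_a hC'0
  have h3 : C' * (3*((K:ℝ)+1)*L) < ((K:ℝ)+1)*L^2 := by
    nlinarith [mul_pos (mul_pos (by linarith : (0:ℝ) < (K:ℝ)+1) (by linarith : (0:ℝ) < L))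
      (by linarith : (0:ℝ) < L - 3*C')]
  linarith [hfin1, htsum_lower, hQle, h1, h2, h3]

theorem stmt_15 :
    (∀ a : ℕ → ℝ, (∀ n, 0 < a n) → Summable a →
      Summable (fun n => qam fExa (Set.Ioi 0) (n + 1) (fun k : Fin (n + 1) => a (k : ℕ)))) ∧
    ¬ (∃ C : ℝ, ∀ a : ℕ → ℝ, (∀ n, 0 < a n) → Summable a →
      Summable (fun n => qam fExa (Set.Ioi 0) (n + 1) (fun k : Fin (n + 1) => a (k : ℕ))) ∧
      ∑' n, qam fExa (Set.Ioi 0) (n + 1) (fun k : Fin (n + 1) => a (k : ℕ)) ≤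
        C * ∑' n, a n) := by
  exact ⟨part1, part2⟩
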